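/- Let G = (V,E) be a median graph and R an intermediate profile on G. For an edge e ∈ E, let S(e) = { (a,b) ∈ A×A : e is an ab-cut }. If edges e_1, ..., e_k are all ab-cuts for the same ordered pair (a,b), then S(e_1) = S(e_2) = ... = S(e_k). -/

import Mathlib

open SimpleGraph

/-- `Geo G u w v` : vertex `w` lies geodesically between `u` and `v`
(i.e. on some shortest path from `u` to `v`). -/
def Geo {V : Type*} (G : SimpleGraph V) (u w v : V) : Prop :=
  G.dist u w + G.dist w v = G.dist u v

/-- A set of vertices is geodesically convex if it contains every vertex
lying on a shortest path between two of its members. -/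
def GConvex {V : Type*} (G : SimpleGraph V) (C : Set V) : Prop :=
  ∀ u ∈ C, ∀ v ∈ C, ∀ w, Geo G u w v → w ∈ C

/-- A profile of strict preference relations is intermediate on `G` if every
set `V_{ab}` of voters preferring `a` to `b` is geodesically convex. -/
def Intermediate {V A : Type*} (G : SimpleGraph V) (R : V → A → A → Prop) : Prop :=
  ∀ a b : A, GConvex G {i | R i a b}

/-- A median graph: connected, and every triple of vertices has a unique median. -/
def MedianGraph {V : Type*} (G : SimpleGraph V) : Prop :=
  G.Connected ∧ ∀ u v w : V, ∃! m : V, Geo G u m v ∧ Geo G u m w ∧ Geo G v m w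

/-- Parity: for an edge `xy` and any vertex `z`, distances to `x` and `y`
differ by exactly one. -/
lemma parity_lemma {V : Type*} {G : SimpleGraph V} (hG : MedianGraph G)
    {x y : V} (z : V) (hxy : G.Adj x y) :
    G.dist z x + 1 = G.dist z y ∨ G.dist z y + 1 = G.dist z x := by
  obtain ⟨m, ⟨hmy, hmz, hyz⟩, -⟩ := hG.2 x y z
  have hd1 : G.dist x y = 1 := (SimpleGraph.dist_eq_one_iff_adj).2 hxy
  have h1 : G.dist x m + G.dist m y = 1 := by
    have := hmy; unfold Geo at this; omega
  unfold Geo at hmz hyz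
  have c1 : G.dist z x = G.dist x z := SimpleGraph.dist_comm
  have c2 : G.dist z y = G.dist y z := SimpleGraph.dist_comm
  rcases Nat.add_eq_one_iff.mp h1 with ⟨hx0, -⟩ | ⟨-, hy0⟩
  · have hmx : m = x := (hG.1.dist_eq_zero_iff.mp hx0).symm
    rw [hmx] at hyz
    have c3 : G.dist y x = G.dist x y := SimpleGraph.dist_comm
    omega
  · have hmy' : m = y := by
      have : G.dist y m = 0 := by
        have c3 : G.dist y m = G.dist m y := SimpleGraph.dist_comm
        omega
      exact (hG.1.dist_eq_zero_iff.mp this).symm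
    rw [hmy'] at hmz
    omega

/-- Key geometric fact: if `u₁v₁` and `u₂v₂` are both `ab`-cuts, then `u₁`
lies between `v₁` and `u₂`, and `v₁` lies between `u₁` and `v₂`. -/
lemma cut_geo {V A : Type*} {G : SimpleGraph V} (hG : MedianGraph G)
    {R : V → A → A → Prop} (hR : ∀ i, IsStrictTotalOrder A (R i))
    (hint : Intermediate G R)
    {a b : A} {u₁ v₁ u₂ v₂ : V}
    (he₁ : G.Adj u₁ v₁) (he₂ : G.Adj u₂ v₂)
    (h₁ : R u₁ a b ∧ R v₁ b a) (h₂ : R u₂ a b ∧ R v₂ b a) :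
    Geo G v₁ u₁ u₂ ∧ Geo G u₁ v₁ v₂ := by
  have hd11 : G.dist u₁ v₁ = 1 := (SimpleGraph.dist_eq_one_iff_adj).2 he₁
  have asym : ∀ i c d, R i c d → R i d c → False := by
    intro i c d h h'
    exact (hR i).irrefl c ((hR i).trans _ _ _ h h')
  have c1 : G.dist v₁ u₁ = G.dist u₁ v₁ := SimpleGraph.dist_comm
  have c2 : G.dist u₂ u₁ = G.dist u₁ u₂ := SimpleGraph.dist_comm
  have c3 : G.dist u₂ v₁ = G.dist v₁ u₂ := SimpleGraph.dist_comm
  have c4 : G.dist v₂ v₁ = G.dist v₁ v₂ := SimpleGraph.dist_comm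
  have c5 : G.dist v₂ u₁ = G.dist u₁ v₂ := SimpleGraph.dist_comm
  constructor
  · rcases parity_lemma hG u₂ he₁ with h | h
    · unfold Geo; omega
    · exfalso
      have hgeo : Geo G u₁ v₁ u₂ := by unfold Geo; omega
      have : R v₁ a b := hint a b u₁ h₁.1 u₂ h₂.1 v₁ hgeo
      exact asym v₁ a b this h₁.2
  · rcases parity_lemma hG v₂ he₁.symm with h | h
    · unfold Geo; omega
    · exfalso
      have hgeo : Geo G v₁ u₁ v₂ := by unfold Geo; omega
      have : R u₁ b a := hint b a v₁ h₁.2 v₂ h₂.2 u₁ hgeo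
      exact asym u₁ b a this h₁.1

lemma transfer {V A : Type*} {G : SimpleGraph V}
    {R : V → A → A → Prop} (hR : ∀ i, IsStrictTotalOrder A (R i))
    (hint : Intermediate G R)
    {u₁ v₁ u₂ v₂ : V}
    (hg1 : Geo G v₁ u₁ u₂) (hg2 : Geo G u₁ v₁ v₂)
    {c d : A} (h : R u₁ c d ∧ R v₁ d c) : R u₂ c d ∧ R v₂ d c := by
  have asym : ∀ i x y, R i x y → R i y x → False := by
    intro i x y hxy hyx
    exact (hR i).irrefl x ((hR i).trans _ _ _ hxy hyx)
  have hcd : c ≠ d := by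
    rintro rfl; exact (hR u₁).irrefl c h.1
  constructor
  · rcases (haveI := hR u₂; trichotomous_of (R u₂) c d) with h' | h' | h'
    · exact h'
    · exact absurd h' hcd
    · exfalso
      have : R u₁ d c := hint d c v₁ h.2 u₂ h' u₁ hg1
      exact asym u₁ c d h.1 this
  · rcases (haveI := hR v₂; trichotomous_of (R v₂) d c) with h' | h' | h'
    · exact h'
    · exact absurd h'.symm hcd
    · exfalso
      have : R v₁ c d := hint c d u₁ h.1 v₂ h' v₁ hg2
      exact asym v₁ d c h.2 this

/-- If two edges of a median graph are both `ab`-cuts of an intermediate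
profile, then they are cuts for exactly the same ordered pairs, i.e. their
cut-sets `S(e)` coincide. -/
theorem stmt3 {V A : Type*} (G : SimpleGraph V) (hG : MedianGraph G)
    (R : V → A → A → Prop) (hR : ∀ i, IsStrictTotalOrder A (R i))
    (hint : Intermediate G R)
    (a b : A) (u₁ v₁ u₂ v₂ : V)
    (he₁ : G.Adj u₁ v₁) (he₂ : G.Adj u₂ v₂)
    (h₁ : R u₁ a b ∧ R v₁ b a) (h₂ : R u₂ a b ∧ R v₂ b a) :
    ∀ c d : A, (R u₁ c d ∧ R v₁ d c) ↔ (R u₂ c d ∧ R v₂ d c) := by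
  intro c d
  obtain ⟨hg1, hg2⟩ := cut_geo hG hR hint he₁ he₂ h₁ h₂
  obtain ⟨hg1', hg2'⟩ := cut_geo hG hR hint he₂ he₁ h₂ h₁
  exact ⟨transfer hR hint hg1 hg2, transfer hR hint hg1' hg2'⟩
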